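/- Let B be a p×m real matrix and suppose its rows B_1,…,B_p, viewed as vectors in ℝ^m, are such that for every subset J of rows, |J| ≤ |{columns with a nonzero entry in some row of J}|, and every square submatrix of B without zero rows or columns is invertible. Then the rows of B are linearly independent. -/

import Mathlib

open Matrix

/-- Marriage condition on the supports of the rows plus genericity implies the
rows of `B` are linearly independent. -/
theorem stmt_10 (p m : ℕ) (B : Matrix (Fin p) (Fin m) ℝ)
    (hmarriage : ∀ J : Finset (Fin p),
      J.card ≤ (Finset.univ.filter fun j : Fin m => ∃ i ∈ J, B i j ≠ 0).card)
    (hgen : ∀ (k : ℕ) (r : Fin k → Fin p) (c : Fin k → Fin m),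
      Function.Injective r → Function.Injective c →
      (∀ i, ∃ j, B (r i) (c j) ≠ 0) → (∀ j, ∃ i, B (r i) (c j) ≠ 0) →
      (B.submatrix r c).det ≠ 0) :
    LinearIndependent ℝ (fun i : Fin p => B i) := by
  -- supports
  set t : Fin p → Finset (Fin m) := fun i => Finset.univ.filter fun j => B i j ≠ 0 with ht
  have hall : ∀ s : Finset (Fin p), s.card ≤ (s.biUnion t).card := by
    intro s
    refine le_trans (hmarriage s) (le_of_eq ?_)
    congr 1
    ext j
    simp [ht, Finset.mem_biUnion]

  obtain ⟨f, hfinj, hf⟩ := (Finset.all_card_le_biUnion_card_iff_exists_injective t).mp hall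
  have hfne : ∀ i, B i (f i) ≠ 0 := by
    intro i
    have := hf i
    simpa [ht] using this
  have hdet : (B.submatrix id f).det ≠ 0 := by
    apply hgen p id f Function.injective_id hfinj
    · intro i; exact ⟨i, hfne i⟩
    · intro j; exact ⟨j, hfne j⟩
  have hli : LinearIndependent ℝ (fun i : Fin p => (B.submatrix id f) i) :=
    Matrix.linearIndependent_rows_iff_isUnit.mpr
      ((Matrix.isUnit_iff_isUnit_det _).mpr (Ne.isUnit hdet))
  -- pull back along column restriction
  let L : (Fin m → ℝ) →ₗ[ℝ] (Fin p → ℝ) :=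
    { toFun := fun v => v ∘ f
      map_add' := by intros; rfl
      map_smul' := by intros; rfl }
  have : LinearIndependent ℝ (L ∘ fun i : Fin p => B i) := by
    convert hli using 1
    rfl
  exact this.of_comp L
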